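/- If a job is assigned to the dummy machine m_d in a job-optimal relaxed unsplit stable assignment, then it is assigned to m_d in every relaxed unsplit stable assignment; and if a job is assigned to a machine other than m_d in a machine-optimal relaxed unsplit stable assignment, then it is assigned to a machine other than m_d in every relaxed unsplit stable assignment. -/
import Mathlib


open Finset

/-- An instance of the (relaxed) unsplittable stable allocation problem:
a finite bipartite graph between jobs `J` and machines `M` given by the
adjacency relation `adj`, sizes `qJ` and capacities `qM`, strict preferences
encoded by injective rank functions (smaller rank = more preferred), and a
dummy machine `md` adjacent to every job, ranked last by every job, whose
capacity exceeds the total size of all jobs. -/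
structure Inst (J M : Type) [Fintype J] [DecidableEq J] [Fintype M] [DecidableEq M] where
  adj : J → M → Prop
  qJ : J → ℝ
  qM : M → ℝ
  qJ_pos : ∀ j, 0 < qJ j
  qM_pos : ∀ m, 0 < qM m
  rankJ : J → M → ℕ
  rankM : M → J → ℕ
  rankJ_inj : ∀ j m m', adj j m → adj j m' → rankJ j m = rankJ j m' → m = m'
  rankM_inj : ∀ m j j', adj j m → adj j' m → rankM m j = rankM m j' → j = j'
  md : M
  md_adj : ∀ j, adj j md
  md_last : ∀ j m, adj j m → m ≠ md → rankJ j m < rankJ j md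
  md_cap : (∑ j : J, qJ j) < qM md

variable {J M : Type} [Fintype J] [DecidableEq J] [Fintype M] [DecidableEq M]

/-- `x(m)`: the total size assigned to machine `m` by the unsplit assignment
`a : J → M` (each job is assigned in its entirety to exactly one machine). -/
def load (I : Inst J M) (a : J → M) (m : M) : ℝ :=
  ∑ j ∈ Finset.univ.filter (fun j => a j = m), I.qJ j

/-- `a` is a valid unsplit assignment: every job is assigned along an edge. -/
def IsUnsplit (I : Inst J M) (a : J → M) : Prop :=
  ∀ j, I.adj j (a j)

/-- The relaxed capacity condition: for every machine `m` with at least one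
assigned job, removing the least preferred job `j` assigned to `m` (largest
rank among assigned jobs) leaves `m` strictly below its capacity. -/
def IsRelaxed (I : Inst J M) (a : J → M) : Prop :=
  ∀ m j, a j = m → (∀ j', a j' = m → I.rankM m j' ≤ I.rankM m j) →
    load I a m - I.qJ j < I.qM m

/-- Edge `jm` (with `a j ≠ m`) blocks `a`: `j` prefers `m` to its assigned
machine, and the total size of jobs assigned to `m` that `m` prefers to `j`
is below `m`'s capacity. -/
def Blocks (I : Inst J M) (a : J → M) (j : J) (m : M) : Prop :=
  I.adj j m ∧ a j ≠ m ∧ I.rankJ j m < I.rankJ j (a j) ∧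
  (∑ j' ∈ Finset.univ.filter (fun j' => a j' = m ∧ I.rankM m j' < I.rankM m j), I.qJ j')
    < I.qM m

/-- A relaxed unsplit stable assignment. -/
def IsStable (I : Inst J M) (a : J → M) : Prop :=
  IsUnsplit I a ∧ IsRelaxed I a ∧ ∀ j m, ¬ Blocks I a j m

/-- Machine `m` weakly prefers `a1` to `a2` (lexicographic order): either the
sets of jobs assigned to `m` coincide, or the best job (in `m`'s preference)
among the jobs assigned to `m` in exactly one of the two assignments is
assigned to `m` in `a1`. -/
def MPrefers (I : Inst J M) (m : M) (a1 a2 : J → M) : Prop :=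
  (∀ j, a1 j = m ↔ a2 j = m) ∨
  ∃ j, a1 j = m ∧ a2 j ≠ m ∧
    ∀ j', ((a1 j' = m ∧ a2 j' ≠ m) ∨ (a2 j' = m ∧ a1 j' ≠ m)) →
      I.rankM m j ≤ I.rankM m j'

/-- Job `j` weakly prefers its machine in `a1` to its machine in `a2`. -/
def JPrefers (I : Inst J M) (j : J) (a1 a2 : J → M) : Prop :=
  I.rankJ j (a1 j) ≤ I.rankJ j (a2 j)

/-- A machine-optimal relaxed unsplit stable assignment. -/
def MOptimal (I : Inst J M) (a : J → M) : Prop :=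
  IsStable I a ∧ ∀ a', IsStable I a' → ∀ m, MPrefers I m a a'

/-- A job-optimal relaxed unsplit stable assignment. -/
def JOptimal (I : Inst J M) (a : J → M) : Prop :=
  IsStable I a ∧ ∀ a', IsStable I a' → ∀ j, JPrefers I j a a'

/-- The size `|x|` of an unsplit assignment: total size of the jobs assigned
to a real (non-dummy) machine. -/
def totalSize (I : Inst J M) (a : J → M) : ℝ :=
  ∑ j ∈ Finset.univ.filter (fun j => a j ≠ I.md), I.qJ j

section AuxLemmas

variable (I : Inst J M)

/-- Prefix load: total size of jobs assigned to `μ` with rank below `r`. -/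
abbrev psum (z : J → M) (μ : M) (r : ℕ) : ℝ :=
  ∑ k ∈ Finset.univ.filter (fun k => z k = μ ∧ I.rankM μ k < r), I.qJ k

lemma psum_le_psum {z z' : J → M} {μ μ' : M} {r r' : ℕ}
    (h : ∀ k, z k = μ → I.rankM μ k < r → z' k = μ' ∧ I.rankM μ' k < r') :
    psum I z μ r ≤ psum I z' μ' r' := by
  apply Finset.sum_le_sum_of_subset_of_nonneg
  · intro k hk
    simp only [Finset.mem_filter, Finset.mem_univ, true_and] at hk ⊢
    exact h k hk.1 hk.2
  · intro k _ _
    exact le_of_lt (I.qJ_pos k)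

lemma psum_mono {z : J → M} {μ : M} {r r' : ℕ} (h : r ≤ r') :
    psum I z μ r ≤ psum I z μ r' :=
  psum_le_psum I (fun k hk hr => ⟨hk, lt_of_lt_of_le hr h⟩)

lemma psum_le_total {z : J → M} {μ : M} {r : ℕ} :
    psum I z μ r ≤ ∑ k : J, I.qJ k := by
  apply Finset.sum_le_sum_of_subset_of_nonneg (Finset.filter_subset _ _)
  intro k _ _
  exact le_of_lt (I.qJ_pos k)

lemma load_le_total {z : J → M} {μ : M} :
    load I z μ ≤ ∑ k : J, I.qJ k := by
  apply Finset.sum_le_sum_of_subset_of_nonneg (Finset.filter_subset _ _)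
  intro k _ _
  exact le_of_lt (I.qJ_pos k)

/-- If `w` is (a) worst job assigned to `μ`, the prefix below it is the whole
load minus `w`. -/
lemma worst_psum {z : J → M} (hz : IsUnsplit I z) {w : J} {μ : M}
    (hw : z w = μ) (hmax : ∀ k, z k = μ → I.rankM μ k ≤ I.rankM μ w) :
    psum I z μ (I.rankM μ w) = load I z μ - I.qJ w := by
  have hset : Finset.univ.filter (fun k => z k = μ ∧ I.rankM μ k < I.rankM μ w)
      = (Finset.univ.filter (fun k => z k = μ)).erase w := by
    ext k
    simp only [Finset.mem_filter, Finset.mem_univ, true_and, Finset.mem_erase]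
    constructor
    · rintro ⟨hk, hlt⟩
      refine ⟨?_, hk⟩
      rintro rfl
      exact absurd hlt (lt_irrefl _)
    · rintro ⟨hne, hk⟩
      refine ⟨hk, lt_of_le_of_ne (hmax k hk) ?_⟩
      intro heq
      have hadjk : I.adj k μ := by have := hz k; rwa [hk] at this
      have hadjw : I.adj w μ := by have := hz w; rwa [hw] at this
      exact hne (I.rankM_inj μ k w hadjk hadjw heq)
  have hwmem : w ∈ Finset.univ.filter (fun k => z k = μ) := by
    simp [hw]
  calc psum I z μ (I.rankM μ w)
      = ∑ k ∈ (Finset.univ.filter (fun k => z k = μ)).erase w, I.qJ k := by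
        rw [psum, hset]
    _ = load I z μ - I.qJ w := Finset.sum_erase_eq_sub hwmem

lemma blocks_sum_ge {o : J → M} (ho : ∀ j m, ¬ Blocks I o j m) {d : J} {μ : M}
    (hadj : I.adj d μ) (hne : o d ≠ μ) (hlt : I.rankJ d μ < I.rankJ d (o d)) :
    I.qM μ ≤ psum I o μ (I.rankM μ d) := by
  by_contra hc
  push_neg at hc
  exact ho d μ ⟨hadj, hne, hlt, hc⟩

/-- No blocking pairs (sum form). -/
def NB (z : J → M) : Prop :=
  ∀ d μ, I.adj d μ → z d ≠ μ → I.rankJ d μ < I.rankJ d (z d) →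
    I.qM μ ≤ psum I z μ (I.rankM μ d)

lemma NB_noblocks {z : J → M} (h : NB I z) : ∀ j m, ¬ Blocks I z j m := by
  intro j m hb
  exact absurd hb.2.2.2 (not_lt.mpr (h j m hb.1 hb.2.1 hb.2.2.1))

/-- Key lemma: for the jobwise meet `z` of two stable assignments `x`, `y`,
no job assigned to `μ` by `x` or `y` but not by `z` can sit above a
less-than-capacity prefix of `z` at `μ`. -/
lemma meet_no_bad {x y z : J → M} (hx : IsStable I x) (hy : IsStable I y)
    (hcases : ∀ k, z k = x k ∨ z k = y k)
    (hmaxx : ∀ k, I.rankJ k (x k) ≤ I.rankJ k (z k))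
    (hmaxy : ∀ k, I.rankJ k (y k) ≤ I.rankJ k (z k)) :
    ∀ μ d, (x d = μ ∨ y d = μ) → z d ≠ μ →
      I.qM μ ≤ psum I z μ (I.rankM μ d) := by
  intro μ
  set B := Finset.univ.filter
    (fun d => (x d = μ ∨ y d = μ) ∧ z d ≠ μ ∧ psum I z μ (I.rankM μ d) < I.qM μ)
    with hBdef
  suffices hB : B = ∅ by
    intro d h1 h2
    by_contra h3
    push_neg at h3
    have hdB : d ∈ B := by
      rw [hBdef]
      simp only [Finset.mem_filter, Finset.mem_univ, true_and]
      exact ⟨h1, h2, h3⟩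
    rw [hB] at hdB
    simp at hdB
  by_contra hBne
  obtain ⟨d, hdB, hdmin⟩ :=
    Finset.exists_min_image B (fun d => I.rankM μ d)
      (Finset.nonempty_iff_ne_empty.mpr hBne)
  rw [hBdef] at hdB
  simp only [Finset.mem_filter, Finset.mem_univ, true_and] at hdB
  obtain ⟨hside, hzne, hsmall⟩ := hdB
  rcases hside with hxd | hyd
  · -- x d = μ, hence z d = y d and d strictly prefers μ to y d
    have hzy : z d = y d := by
      rcases hcases d with h | h
      · exact absurd (h.trans hxd) hzne
      · exact h
    have hadj : I.adj d μ := by have := hx.1 d; rwa [hxd] at this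
    have hyne : y d ≠ μ := fun h => hzne (hzy.trans h)
    have hlt : I.rankJ d μ < I.rankJ d (y d) := by
      have h1 : I.rankJ d μ ≤ I.rankJ d (y d) := by
        have := hmaxx d
        rw [hxd, hzy] at this
        exact this
      rcases lt_or_eq_of_le h1 with h | h
      · exact h
      · exact absurd (I.rankJ_inj d μ (y d) hadj (hy.1 d) h).symm hyne
    have hfull := blocks_sum_ge I hy.2.2 hadj hyne hlt
    by_cases hall : ∀ k, y k = μ → I.rankM μ k < I.rankM μ d → z k = μ
    · have : psum I y μ (I.rankM μ d) ≤ psum I z μ (I.rankM μ d) :=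
        psum_le_psum I (fun k hk hr => ⟨hall k hk hr, hr⟩)
      linarith
    · push_neg at hall
      obtain ⟨k, hk1, hk2, hk3⟩ := hall
      have hkB : k ∈ B := by
        rw [hBdef]
        simp only [Finset.mem_filter, Finset.mem_univ, true_and]
        exact ⟨Or.inr hk1, hk3,
          lt_of_le_of_lt (psum_mono I (le_of_lt hk2)) hsmall⟩
      have := hdmin k hkB
      omega
  · -- y d = μ, hence z d = x d and d strictly prefers μ to x d
    have hzx : z d = x d := by
      rcases hcases d with h | h
      · exact h
      · exact absurd (h.trans hyd) hzne
    have hadj : I.adj d μ := by have := hy.1 d; rwa [hyd] at this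
    have hxne : x d ≠ μ := fun h => hzne (hzx.trans h)
    have hlt : I.rankJ d μ < I.rankJ d (x d) := by
      have h1 : I.rankJ d μ ≤ I.rankJ d (x d) := by
        have := hmaxy d
        rw [hyd, hzx] at this
        exact this
      rcases lt_or_eq_of_le h1 with h | h
      · exact h
      · exact absurd (I.rankJ_inj d μ (x d) hadj (hx.1 d) h).symm hxne
    have hfull := blocks_sum_ge I hx.2.2 hadj hxne hlt
    by_cases hall : ∀ k, x k = μ → I.rankM μ k < I.rankM μ d → z k = μ
    · have : psum I x μ (I.rankM μ d) ≤ psum I z μ (I.rankM μ d) :=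
        psum_le_psum I (fun k hk hr => ⟨hall k hk hr, hr⟩)
      linarith
    · push_neg at hall
      obtain ⟨k, hk1, hk2, hk3⟩ := hall
      have hkB : k ∈ B := by
        rw [hBdef]
        simp only [Finset.mem_filter, Finset.mem_univ, true_and]
        exact ⟨Or.inl hk1, hk3,
          lt_of_le_of_lt (psum_mono I (le_of_lt hk2)) hsmall⟩
      have := hdmin k hkB
      omega

/-- The meet of two stable assignments has no blocking pairs. -/
lemma meet_NB {x y z : J → M} (hx : IsStable I x) (hy : IsStable I y)
    (hcases : ∀ k, z k = x k ∨ z k = y k)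
    (hmaxx : ∀ k, I.rankJ k (x k) ≤ I.rankJ k (z k))
    (hmaxy : ∀ k, I.rankJ k (y k) ≤ I.rankJ k (z k)) :
    NB I z := by
  intro d μ hadj hne hlt
  by_contra h3
  push_neg at h3
  rcases hcases d with hzd | hzd
  · have hxne : x d ≠ μ := fun h => hne (hzd.trans h)
    have hlt' : I.rankJ d μ < I.rankJ d (x d) := by rwa [hzd] at hlt
    have hfull := blocks_sum_ge I hx.2.2 hadj hxne hlt'
    by_cases hall : ∀ k, x k = μ → I.rankM μ k < I.rankM μ d → z k = μ
    · have : psum I x μ (I.rankM μ d) ≤ psum I z μ (I.rankM μ d) :=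
        psum_le_psum I (fun k hk hr => ⟨hall k hk hr, hr⟩)
      linarith
    · push_neg at hall
      obtain ⟨k, hk1, hk2, hk3⟩ := hall
      have := meet_no_bad I hx hy hcases hmaxx hmaxy μ k (Or.inl hk1) hk3
      have h4 : psum I z μ (I.rankM μ k) ≤ psum I z μ (I.rankM μ d) :=
        psum_mono I (le_of_lt hk2)
      linarith
  · have hyne : y d ≠ μ := fun h => hne (hzd.trans h)
    have hlt' : I.rankJ d μ < I.rankJ d (y d) := by rwa [hzd] at hlt
    have hfull := blocks_sum_ge I hy.2.2 hadj hyne hlt'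
    by_cases hall : ∀ k, y k = μ → I.rankM μ k < I.rankM μ d → z k = μ
    · have : psum I y μ (I.rankM μ d) ≤ psum I z μ (I.rankM μ d) :=
        psum_le_psum I (fun k hk hr => ⟨hall k hk hr, hr⟩)
      linarith
    · push_neg at hall
      obtain ⟨k, hk1, hk2, hk3⟩ := hall
      have := meet_no_bad I hx hy hcases hmaxx hmaxy μ k (Or.inr hk1) hk3
      have h4 : psum I z μ (I.rankM μ k) ≤ psum I z μ (I.rankM μ d) :=
        psum_mono I (le_of_lt hk2)
      linarith

/-- Repair: any blocking-free unsplit assignment can be turned into a stable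
one by repeatedly demoting a worst over-capacity job; md-assignments are
preserved. -/
lemma repair : ∀ (n : ℕ) (z : J → M),
    (∑ k : J, (I.rankJ k I.md - I.rankJ k (z k))) < n →
    IsUnsplit I z → NB I z →
    ∃ z', IsStable I z' ∧ ∀ e, z e = I.md → z' e = I.md := by
  intro n
  induction n with
  | zero => intro z h; exact absurd h (Nat.not_lt_zero _)
  | succ n IH =>
    intro z hmeas hun hNB
    classical
    by_cases hrel : IsRelaxed I z
    · exact ⟨z, ⟨hun, hrel, NB_noblocks I hNB⟩, fun e he => he⟩
    · simp only [IsRelaxed] at hrel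
      push_neg at hrel
      obtain ⟨m0, j0, hjm, hmax, hload⟩ := hrel
      have hmne : m0 ≠ I.md := by
        rintro rfl
        have h1 : load I z I.md ≤ ∑ k : J, I.qJ k := load_le_total I
        have h2 := I.md_cap
        have h3 := I.qJ_pos j0
        linarith
      have hpw : psum I z m0 (I.rankM m0 j0) = load I z m0 - I.qJ j0 :=
        worst_psum I hun hjm hmax
      have hfull : I.qM m0 ≤ psum I z m0 (I.rankM m0 j0) := by
        rw [hpw]; exact hload
      set C := Finset.univ.filter
        (fun μ => I.adj j0 μ ∧ psum I z μ (I.rankM μ j0) < I.qM μ) with hCdef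
      have hmdC : I.md ∈ C := by
        rw [hCdef]
        simp only [Finset.mem_filter, Finset.mem_univ, true_and]
        exact ⟨I.md_adj j0, lt_of_le_of_lt (psum_le_total I) I.md_cap⟩
      obtain ⟨μs, hμsC, hμsmin⟩ :=
        Finset.exists_min_image C (fun μ => I.rankJ j0 μ) ⟨_, hmdC⟩
      rw [hCdef] at hμsC
      simp only [Finset.mem_filter, Finset.mem_univ, true_and] at hμsC
      obtain ⟨hadjs, hsmalls⟩ := hμsC
      have hmμs : m0 ≠ μs := by
        rintro rfl
        exact absurd hsmalls (not_lt.mpr hfull)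
      have hrank : I.rankJ j0 m0 < I.rankJ j0 μs := by
        rcases lt_trichotomy (I.rankJ j0 m0) (I.rankJ j0 μs) with h | h | h
        · exact h
        · have hadjm : I.adj j0 m0 := by have := hun j0; rwa [hjm] at this
          exact absurd (I.rankJ_inj j0 m0 μs hadjm hadjs h) hmμs
        · have hzne : z j0 ≠ μs := by rw [hjm]; exact hmμs
          have := hNB j0 μs hadjs hzne (by rwa [hjm])
          exact absurd hsmalls (not_lt.mpr this)
      set z' := Function.update z j0 μs with hz'def
      have hz'j : z' j0 = μs := by rw [hz'def]; simp
      have hz'k : ∀ k, k ≠ j0 → z' k = z k := by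
        intro k hk
        rw [hz'def]
        exact Function.update_of_ne hk _ _
      have hun' : IsUnsplit I z' := by
        intro k
        by_cases hk : k = j0
        · subst hk; rw [hz'j]; exact hadjs
        · rw [hz'k k hk]; exact hun k
      -- no blocking for z'
      have hNB' : NB I z' := by
        intro d μ hadj' hne' hlt'
        by_cases hdj : j0 = d
        · subst hdj
          rw [hz'j] at hne' hlt'
          by_cases hμm : m0 = μ
          · subst hμm
            have heq : psum I z' m0 (I.rankM m0 j0) = psum I z m0 (I.rankM m0 j0) := by
              apply le_antisymm
              · apply psum_le_psum I
                intro k hk hr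
                have hkj : k ≠ j0 := by
                  rintro rfl
                  rw [hz'j] at hk
                  exact hmμs hk.symm
                rw [hz'k k hkj] at hk
                exact ⟨hk, hr⟩
              · apply psum_le_psum I
                intro k hk hr
                have hkj : k ≠ j0 := by
                  rintro rfl
                  exact absurd hr (lt_irrefl _)
                rw [hz'k k hkj]
                exact ⟨hk, hr⟩
            rw [heq]
            exact hfull
          · have hμnotC : μ ∉ C := by
              intro hC
              exact absurd hlt' (not_lt.mpr (hμsmin μ hC))
            have hge : I.qM μ ≤ psum I z μ (I.rankM μ j0) := by
              rw [hCdef] at hμnotC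
              simp only [Finset.mem_filter, Finset.mem_univ, true_and,
                not_and, not_lt] at hμnotC
              exact hμnotC hadj'
            refine le_trans hge (psum_le_psum I ?_)
            intro k hk hr
            have hkj : k ≠ j0 := by
              rintro rfl
              rw [hjm] at hk
              exact hμm hk
            rw [hz'k k hkj]
            exact ⟨hk, hr⟩
        · have hz'd : z' d = z d := hz'k d (fun h => hdj h.symm)
          rw [hz'd] at hne' hlt'
          by_cases hμm : m0 = μ
          · subst hμm
            by_cases hcross : I.rankM m0 j0 < I.rankM m0 d
            · refine le_trans hfull (psum_le_psum I ?_)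
              intro k hk hr
              have hkj : k ≠ j0 := by
                rintro rfl
                exact absurd hr (lt_irrefl _)
              rw [hz'k k hkj]
              exact ⟨hk, lt_trans hr hcross⟩
            · push_neg at hcross
              refine le_trans (hNB d _ hadj' hne' hlt') (psum_le_psum I ?_)
              intro k hk hr
              have hkj : k ≠ j0 := by
                rintro rfl
                exact absurd (lt_of_lt_of_le hr hcross) (lt_irrefl _)
              rw [hz'k k hkj]
              exact ⟨hk, hr⟩
          · refine le_trans (hNB d μ hadj' hne' hlt') (psum_le_psum I ?_)
            intro k hk hr
            have hkj : k ≠ j0 := by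
              rintro rfl
              rw [hjm] at hk
              exact hμm hk
            rw [hz'k k hkj]
            exact ⟨hk, hr⟩
      -- measure decreases
      have hms_le_md : I.rankJ j0 μs ≤ I.rankJ j0 I.md := by
        by_cases h : μs = I.md
        · subst h; exact le_refl _
        · exact le_of_lt (I.md_last j0 μs hadjs h)
      have hmeas' : (∑ k : J, (I.rankJ k I.md - I.rankJ k (z' k)))
          < (∑ k : J, (I.rankJ k I.md - I.rankJ k (z k))) := by
        apply Finset.sum_lt_sum
        · intro i _
          by_cases h : i = j0
          · subst h
            rw [hz'j, hjm]
            omega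
          · rw [hz'k i h]
        · refine ⟨j0, Finset.mem_univ j0, ?_⟩
          rw [hz'j, hjm]
          have hadjm : I.adj j0 m0 := by have := hun j0; rwa [hjm] at this
          have hm_lt_md : I.rankJ j0 m0 < I.rankJ j0 I.md :=
            I.md_last j0 m0 hadjm hmne
          omega
      obtain ⟨z'', hst, hmd⟩ := IH z' (by omega) hun' hNB'
      refine ⟨z'', hst, fun e he => ?_⟩
      have hej : e ≠ j0 := by
        rintro rfl
        rw [hjm] at he
        exact hmne he
      exact hmd e (by rw [hz'k e hej]; exact he)

end AuxLemmas

/-- a job assigned to the dummy machine in a job-optimal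
relaxed unsplit stable assignment is assigned to the dummy machine in every
relaxed unsplit stable assignment; a job assigned to a real machine in a
machine-optimal relaxed unsplit stable assignment is assigned to a real
machine in every relaxed unsplit stable assignment. -/
theorem dummy_assignment_invariance (I : Inst J M)
    (aj : J → M) (hj : JOptimal I aj)
    (am : J → M) (hm : MOptimal I am)
    (a : J → M) (ha : IsStable I a) :
    (∀ j, aj j = I.md → a j = I.md) ∧ (∀ j, am j ≠ I.md → a j ≠ I.md) := by
  constructor
  · -- part 1
    intro j hjmd
    by_contra hne
    have h1 : I.rankJ j (aj j) ≤ I.rankJ j (a j) := hj.2 a ha j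
    rw [hjmd] at h1
    have h2 : I.rankJ j (a j) < I.rankJ j I.md := I.md_last j (a j) (ha.1 j) hne
    omega
  · -- part 2
    intro j hjam hcon
    have ham : IsStable I am := hm.1
    -- the jobwise meet of am and a
    set z₀ : J → M := fun k =>
      if I.rankJ k (a k) < I.rankJ k (am k) then am k else a k with hz₀def
    have hcases : ∀ k, z₀ k = am k ∨ z₀ k = a k := by
      intro k
      rw [hz₀def]
      by_cases h : I.rankJ k (a k) < I.rankJ k (am k)
      · left; simp [h]
      · right; simp [h]
    have hmaxam : ∀ k, I.rankJ k (am k) ≤ I.rankJ k (z₀ k) := by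
      intro k
      rw [hz₀def]
      by_cases h : I.rankJ k (a k) < I.rankJ k (am k)
      · simp [h]
      · simp only [h, if_false]
        exact not_lt.mp h
    have hmaxa : ∀ k, I.rankJ k (a k) ≤ I.rankJ k (z₀ k) := by
      intro k
      rw [hz₀def]
      by_cases h : I.rankJ k (a k) < I.rankJ k (am k)
      · simp only [h, if_true]
        exact le_of_lt h
      · simp [h]
    have hz₀un : IsUnsplit I z₀ := by
      intro k
      rcases hcases k with h | h
      · rw [h]; exact ham.1 k
      · rw [h]; exact ha.1 k
    have hz₀NB : NB I z₀ := meet_NB I ham ha hcases hmaxam hmaxa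
    have hz₀j : z₀ j = I.md := by
      have h1 : I.rankJ j (am j) < I.rankJ j I.md :=
        I.md_last j (am j) (ham.1 j) hjam
      have h2 : ¬ I.rankJ j (a j) < I.rankJ j (am j) := by
        rw [hcon]; omega
      rw [hz₀def]
      simp only [h2, if_false]
      exact hcon
    have hz₀md : ∀ e, am e = I.md → z₀ e = I.md := by
      intro e he
      rw [hz₀def]
      by_cases h : I.rankJ e (a e) < I.rankJ e (am e)
      · simp only [h, if_true]; exact he
      · simp only [h, if_false]
        by_contra hne
        push_neg at h
        have h2 : I.rankJ e (a e) < I.rankJ e I.md :=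
          I.md_last e (a e) (ha.1 e) hne
        rw [he] at h
        omega
    obtain ⟨z', hst, hmd⟩ :=
      repair I ((∑ k : J, (I.rankJ k I.md - I.rankJ k (z₀ k))) + 1) z₀
        (Nat.lt_succ_self _) hz₀un hz₀NB
    have hz'j : z' j = I.md := hmd j hz₀j
    rcases hm.2 z' hst I.md with hcase1 | ⟨k, hk1, hk2, _⟩
    · exact hjam ((hcase1 j).mpr hz'j)
    · exact hk2 (hmd k (hz₀md k hk1))
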